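/- Let 𝒜 ⊆ M_n be a *-subalgebra with identity, A its hermitian part, and U ⊆ A a subspace strictly containing ℝ·id. Then for all projections p, q ∈ 𝒜: (ℝ·id + p'𝒜⁺p') ∩ U = (ℝ·id + q'𝒜⁺q') ∩ U if and only if p'𝒜⁺p' ∩ U = q'𝒜⁺q' ∩ U, where p' = id − p and q' = id − q. -/

import Mathlib

open Matrix
open scoped ComplexOrder

-- helper 1: hermitian matrix plus large multiple of identity is psd
lemma herm_shift {n : ℕ} {A : Matrix (Fin n) (Fin n) ℂ} (hA : A.IsHermitian) :
    ∃ t : ℝ, (A + t • (1 : Matrix (Fin n) (Fin n) ℂ)).PosSemidef := by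
  classical
  refine ⟨∑ i, |hA.eigenvalues i|, ?_⟩
  set t : ℝ := ∑ i, |hA.eigenvalues i| with ht
  have hV : (hA.eigenvectorUnitary : Matrix (Fin n) (Fin n) ℂ) *
      (star (hA.eigenvectorUnitary : Matrix (Fin n) (Fin n) ℂ)) = 1 :=
    (Matrix.mem_unitaryGroup_iff).mp hA.eigenvectorUnitary.2
  have key : A + t • (1 : Matrix (Fin n) (Fin n) ℂ) =
      (hA.eigenvectorUnitary : Matrix (Fin n) (Fin n) ℂ) *
        diagonal (fun i => ((hA.eigenvalues i + t : ℝ) : ℂ)) *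
        (star (hA.eigenvectorUnitary : Matrix (Fin n) (Fin n) ℂ)) := by
    have hd : diagonal (fun i => ((hA.eigenvalues i + t : ℝ) : ℂ)) =
        diagonal (RCLike.ofReal ∘ hA.eigenvalues) + t • (1 : Matrix (Fin n) (Fin n) ℂ) := by
      rw [← Matrix.diagonal_one, ← Matrix.diagonal_smul, Matrix.diagonal_add]
      congr 1; funext i; simp [Complex.ofReal_add]
    rw [hd, mul_add, add_mul]
    have hs := hA.spectral_theorem
    rw [Unitary.conjStarAlgAut_apply] at hs
    rw [← hs]
    congr 1
    rw [Matrix.mul_smul, smul_mul_assoc, mul_one, hV]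
  rw [key]
  have : (diagonal (fun i => ((hA.eigenvalues i + t : ℝ) : ℂ))).PosSemidef := by
    rw [posSemidef_diagonal_iff]
    intro i
    have h1 : -hA.eigenvalues i ≤ t := by
      calc -hA.eigenvalues i ≤ |hA.eigenvalues i| := neg_le_abs _
        _ ≤ t := Finset.single_le_sum (f := fun i => |hA.eigenvalues i|)
            (fun i _ => abs_nonneg _) (Finset.mem_univ i)
    have : (0:ℝ) ≤ hA.eigenvalues i + t := by linarith
    exact_mod_cast Complex.zero_le_real.mpr this
  simpa [Matrix.star_eq_conjTranspose] using this.mul_mul_conjTranspose_same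
    (hA.eigenvectorUnitary : Matrix (Fin n) (Fin n) ℂ)

-- helper 2: sum of two psd matrices is zero implies both are zero
lemma psd_add_eq_zero {n : ℕ} {x y : Matrix (Fin n) (Fin n) ℂ}
    (hx : x.PosSemidef) (hy : y.PosSemidef) (hxy : x + y = 0) : x = 0 := by
  have hcol : ∀ v, x *ᵥ v = 0 := by
    intro v
    rw [← hx.dotProduct_mulVec_zero_iff]
    have h1 : 0 ≤ star v ⬝ᵥ x *ᵥ v := hx.dotProduct_mulVec_nonneg v
    have h2 : 0 ≤ star v ⬝ᵥ y *ᵥ v := hy.dotProduct_mulVec_nonneg v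
    have h3 : star v ⬝ᵥ x *ᵥ v + star v ⬝ᵥ y *ᵥ v = 0 := by
      rw [← dotProduct_add, ← add_mulVec, hxy, zero_mulVec, dotProduct_zero]
    have h4 : star v ⬝ᵥ x *ᵥ v ≤ 0 := by
      have h5 := eq_neg_of_add_eq_zero_left h3
      rw [h5]; exact neg_nonpos.mpr h2
    exact le_antisymm h4 h1
  ext i j
  have := congrFun (hcol (Pi.single j 1)) i
  simpa [mulVec_single] using this

lemma mat_ne_zero_vec {n : ℕ} {q : Matrix (Fin n) (Fin n) ℂ} (hq : q ≠ 0) :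
    ∃ v, q *ᵥ v ≠ 0 := by
  by_contra h
  push_neg at h
  apply hq
  ext i j
  have := congrFun (h (Pi.single j 1)) i
  simpa [mulVec_single] using this

lemma dot_star_self_pos {n : ℕ} {w : Fin n → ℂ} (hw : w ≠ 0) :
    0 < star w ⬝ᵥ w := by
  refine lt_of_le_of_ne (dotProduct_star_self_nonneg w) ?_
  intro h
  exact hw (dotProduct_star_self_eq_zero.mp h.symm)

-- the key one-directional inclusion for the hard direction
lemma stmt8_key {n : ℕ} (𝒜 : StarSubalgebra ℂ (Matrix (Fin n) (Fin n) ℂ))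
    (U : Submodule ℝ (Matrix (Fin n) (Fin n) ℂ))
    (hU : ∀ u ∈ U, u ∈ 𝒜 ∧ uᴴ = u)
    (h1 : (1 : Matrix (Fin n) (Fin n) ℂ) ∈ U)
    (hstrict : ∃ u ∈ U, ∀ t : ℝ, u ≠ t • (1 : Matrix (Fin n) (Fin n) ℂ))
    (p q : Matrix (Fin n) (Fin n) ℂ)
    (hp : p ∈ 𝒜) (hpH : pᴴ = p) (hpi : p * p = p)
    (hq : q ∈ 𝒜) (hqH : qᴴ = q) (hqi : q * q = q)
    (hset : ({u | u ∈ U ∧ ∃ t : ℝ, ∃ a : Matrix (Fin n) (Fin n) ℂ, a ∈ 𝒜 ∧ a.PosSemidef ∧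
          u = t • (1 : Matrix (Fin n) (Fin n) ℂ) + (1 - p) * a * (1 - p)}
        = {u | u ∈ U ∧ ∃ t : ℝ, ∃ a : Matrix (Fin n) (Fin n) ℂ, a ∈ 𝒜 ∧ a.PosSemidef ∧
          u = t • (1 : Matrix (Fin n) (Fin n) ℂ) + (1 - q) * a * (1 - q)})) :
    ({u | u ∈ U ∧ ∃ a : Matrix (Fin n) (Fin n) ℂ, a ∈ 𝒜 ∧ a.PosSemidef ∧
          u = (1 - p) * a * (1 - p)}
        ⊆ {u | u ∈ U ∧ ∃ a : Matrix (Fin n) (Fin n) ℂ, a ∈ 𝒜 ∧ a.PosSemidef ∧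
          u = (1 - q) * a * (1 - q)}) := by
  have hpH' : (1 - p)ᴴ = 1 - p := by
    rw [conjTranspose_sub, conjTranspose_one, hpH]
  have hqH' : (1 - q)ᴴ = 1 - q := by
    rw [conjTranspose_sub, conjTranspose_one, hqH]
  rintro u ⟨huU, a, ha𝒜, haP, hua⟩
  -- u is psd
  have huP : u.PosSemidef := by
    rw [hua]
    have h := haP.conjTranspose_mul_mul_same (1 - p)
    rw [hpH'] at h
    exact h
  have hu𝒜 : u ∈ 𝒜 := by
    rw [hua]
    exact mul_mem (mul_mem (sub_mem (one_mem 𝒜) hp) ha𝒜) (sub_mem (one_mem 𝒜) hp)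
  -- u belongs to the affine set, hence to the other one
  have humem : u ∈ {u | u ∈ U ∧ ∃ t : ℝ, ∃ a : Matrix (Fin n) (Fin n) ℂ, a ∈ 𝒜 ∧ a.PosSemidef ∧
      u = t • (1 : Matrix (Fin n) (Fin n) ℂ) + (1 - q) * a * (1 - q)} := by
    rw [← hset]
    exact ⟨huU, 0, a, ha𝒜, haP, by simpa using hua⟩
  obtain ⟨-, t, b, hb𝒜, hbP, hub⟩ := humem
  by_cases ht : t = 0
  · subst ht
    exact ⟨huU, b, hb𝒜, hbP, by simpa using hub⟩
  by_cases hq0 : q = 0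
  · subst hq0
    refine ⟨huU, u, hu𝒜, huP, by simp⟩
  -- now t ≠ 0, q ≠ 0; derive a contradiction
  exfalso
  -- q * u * q = t • q
  have hquq : q * u * q = (t : ℂ) • q := by
    rw [hub]
    have h2 : q * (1 - q) = 0 := by
      rw [mul_sub, mul_one, hqi, sub_self]
    rw [mul_add, add_mul, Matrix.mul_smul, mul_one, Matrix.smul_mul]
    rw [← mul_assoc, ← mul_assoc, h2, Matrix.zero_mul, Matrix.zero_mul, Matrix.zero_mul, add_zero,
      hqi]
    ext i j
    simp [Matrix.smul_apply, Complex.real_smul]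
  have htqP : ((t : ℂ) • q).PosSemidef := by
    rw [← hquq]
    have h := huP.conjTranspose_mul_mul_same q
    rw [hqH] at h
    exact h
  -- get a vector witnessing q ≠ 0
  obtain ⟨v, hv⟩ := mat_ne_zero_vec hq0
  -- star v ⬝ᵥ q *ᵥ v = star (q v) ⬝ᵥ (q v) > 0
  have hqv : star v ⬝ᵥ q *ᵥ v = star (q *ᵥ v) ⬝ᵥ (q *ᵥ v) := by
    rw [star_mulVec, hqH]
    conv_lhs => rw [← hqi]
    rw [← mulVec_mulVec, dotProduct_mulVec]
  have hqvpos : 0 < star v ⬝ᵥ q *ᵥ v := by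
    rw [hqv]; exact dot_star_self_pos hv
  -- positivity of t
  have htpos : 0 < t := by
    have h0 := htqP.dotProduct_mulVec_nonneg v
    rw [smul_mulVec, dotProduct_smul, smul_eq_mul] at h0
    have him : (star v ⬝ᵥ q *ᵥ v).im = 0 := by
      have := hqvpos; rw [Complex.lt_def] at this; simp at this; exact this.2.symm
    have hre : 0 < (star v ⬝ᵥ q *ᵥ v).re := by
      have := hqvpos; rw [Complex.lt_def] at this; simpa using this.1
    rw [Complex.le_def] at h0
    have := h0.1
    rw [Complex.mul_re, him] at this
    simp at this
    have htnn : 0 ≤ t := by nlinarith [this, hre]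
    exact lt_of_le_of_ne htnn (Ne.symm ht)
  -- show p = 0
  have hp0 : p = 0 := by
    by_contra hpne
    obtain ⟨v', hv'⟩ := mat_ne_zero_vec hpne
    set w := p *ᵥ v' with hw
    -- u *ᵥ w = 0
    have hup : u * p = 0 := by
      rw [hua, mul_assoc, mul_assoc]
      have : (1 - p) * p = 0 := by rw [sub_mul, one_mul, hpi, sub_self]
      rw [this, Matrix.mul_zero, Matrix.mul_zero]
    have huw : u *ᵥ w = 0 := by
      rw [hw, mulVec_mulVec, hup, zero_mulVec]
    -- but u - t•1 is psd
    have hsub : (u - (t:ℝ) • (1 : Matrix (Fin n) (Fin n) ℂ)).PosSemidef := by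
      have : u - (t:ℝ) • (1 : Matrix (Fin n) (Fin n) ℂ) = (1 - q) * b * (1 - q) := by
        rw [hub, add_sub_cancel_left]
      rw [this]
      have h := hbP.conjTranspose_mul_mul_same (1 - q)
      rw [hqH'] at h
      exact h
    have h0 := hsub.dotProduct_mulVec_nonneg w
    rw [sub_mulVec, huw, zero_sub, dotProduct_neg, smul_mulVec, one_mulVec,
      dotProduct_smul] at h0
    rw [show (t : ℝ) • (star w ⬝ᵥ w) = (t : ℂ) * (star w ⬝ᵥ w) from by
      rw [Complex.real_smul]] at h0
    have hwpos : 0 < star w ⬝ᵥ w := dot_star_self_pos hv'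
    rw [Complex.le_def] at h0
    have hre := h0.1
    have him : (star w ⬝ᵥ w).im = 0 := by
      have := hwpos; rw [Complex.lt_def] at this; simp at this; exact this.2.symm
    have hwre : 0 < (star w ⬝ᵥ w).re := by
      have := hwpos; rw [Complex.lt_def] at this; simpa using this.1
    simp only [Complex.zero_re, Complex.neg_re, Complex.real_smul, Complex.mul_re,
      Complex.ofReal_re, Complex.ofReal_im, him, zero_mul, mul_zero, sub_zero] at hre
    nlinarith
  subst hp0
  -- now every element of U is in the affine set for p = 0
  have hUsub : ∀ v ∈ U, ∃ t : ℝ, ∃ c : Matrix (Fin n) (Fin n) ℂ, c ∈ 𝒜 ∧ c.PosSemidef ∧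
      v = t • (1 : Matrix (Fin n) (Fin n) ℂ) + (1 - q) * c * (1 - q) := by
    intro v hvU
    obtain ⟨hv𝒜, hvH⟩ := hU v hvU
    obtain ⟨s, hs⟩ := herm_shift (show v.IsHermitian from hvH)
    have : v ∈ ({u | u ∈ U ∧ ∃ t : ℝ, ∃ a : Matrix (Fin n) (Fin n) ℂ, a ∈ 𝒜 ∧ a.PosSemidef ∧
        u = t • (1 : Matrix (Fin n) (Fin n) ℂ) + (1 - q) * a * (1 - q)}) := by
      rw [← hset]
      refine ⟨hvU, -s, v + s • 1, ?_, hs, ?_⟩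
      · refine add_mem hv𝒜 ?_
        have hss : s • (1 : Matrix (Fin n) (Fin n) ℂ) = ((s : ℂ)) • 1 := by
          ext i j; simp [Matrix.smul_apply, Complex.real_smul]
        rw [hss]
        exact SMulMemClass.smul_mem _ (one_mem 𝒜)
      · rw [sub_zero, one_mul, mul_one]
        module
    obtain ⟨-, t', c, hc𝒜, hcP, hvc⟩ := this
    exact ⟨t', c, hc𝒜, hcP, hvc⟩
  obtain ⟨u₀, hu₀U, hu₀⟩ := hstrict
  obtain ⟨s₁, c₁, hc₁𝒜, hc₁P, hh₁⟩ := hUsub u₀ hu₀U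
  obtain ⟨s₂, c₂, hc₂𝒜, hc₂P, hh₂⟩ := hUsub (-u₀) (neg_mem hu₀U)
  have hd₁ : ((1 - q) * c₁ * (1 - q)).PosSemidef := by
    have h := hc₁P.conjTranspose_mul_mul_same (1 - q); rw [hqH'] at h; exact h
  have hd₂ : ((1 - q) * c₂ * (1 - q)).PosSemidef := by
    have h := hc₂P.conjTranspose_mul_mul_same (1 - q); rw [hqH'] at h; exact h
  have h1q : (1 - q) * q = 0 := by rw [sub_mul, one_mul, hqi, sub_self]
  have hq1 : q * (1 - q) = 0 := by rw [mul_sub, mul_one, hqi, sub_self]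
  have hqXq : ∀ c : Matrix (Fin n) (Fin n) ℂ, q * ((1 - q) * c * (1 - q)) * q = 0 := by
    intro c
    calc q * ((1 - q) * c * (1 - q)) * q
        = (q * (1 - q)) * c * ((1 - q) * q) := by noncomm_ring
      _ = 0 := by rw [hq1, h1q, Matrix.zero_mul, Matrix.mul_zero]
  have hsum : (s₁ + s₂) • (1 : Matrix (Fin n) (Fin n) ℂ) +
      ((1 - q) * c₁ * (1 - q) + (1 - q) * c₂ * (1 - q)) = 0 := by
    have h3 : (s₁ • (1 : Matrix (Fin n) (Fin n) ℂ) + (1 - q) * c₁ * (1 - q)) +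
        (s₂ • (1 : Matrix (Fin n) (Fin n) ℂ) + (1 - q) * c₂ * (1 - q)) = 0 := by
      rw [← hh₁, ← hh₂]; simp
    calc (s₁ + s₂) • (1 : Matrix (Fin n) (Fin n) ℂ) +
          ((1 - q) * c₁ * (1 - q) + (1 - q) * c₂ * (1 - q))
        = (s₁ • (1 : Matrix (Fin n) (Fin n) ℂ) + (1 - q) * c₁ * (1 - q)) +
          (s₂ • (1 : Matrix (Fin n) (Fin n) ℂ) + (1 - q) * c₂ * (1 - q)) := by
          rw [add_smul]; abel
      _ = 0 := h3
  have hqs : (s₁ + s₂) • q = 0 := by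
    have h4 : q * ((s₁ + s₂) • (1 : Matrix (Fin n) (Fin n) ℂ) +
        ((1 - q) * c₁ * (1 - q) + (1 - q) * c₂ * (1 - q))) * q = 0 := by
      rw [hsum, Matrix.mul_zero, Matrix.zero_mul]
    rw [mul_add, add_mul, mul_add, add_mul, hqXq, hqXq, add_zero, add_zero,
      Matrix.mul_smul, mul_one, Matrix.smul_mul, hqi] at h4
    exact h4
  have hss : s₁ + s₂ = 0 := by
    by_contra h
    apply hq0
    have h5 := congrArg (fun m => (s₁ + s₂)⁻¹ • m) hqs
    simpa [smul_smul, inv_mul_cancel₀ h] using h5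
  have hXY : (1 - q) * c₁ * (1 - q) + (1 - q) * c₂ * (1 - q) = 0 := by
    rw [hss] at hsum; simpa using hsum
  have hX0 : (1 - q) * c₁ * (1 - q) = 0 := psd_add_eq_zero hd₁ hd₂ hXY
  apply hu₀ s₁
  rw [hh₁, hX0, add_zero]

lemma stmt8_easy {n : ℕ} (𝒜 : StarSubalgebra ℂ (Matrix (Fin n) (Fin n) ℂ))
    (U : Submodule ℝ (Matrix (Fin n) (Fin n) ℂ))
    (h1 : (1 : Matrix (Fin n) (Fin n) ℂ) ∈ U)
    (p q : Matrix (Fin n) (Fin n) ℂ)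
    (hPQ : ({u | u ∈ U ∧ ∃ a : Matrix (Fin n) (Fin n) ℂ, a ∈ 𝒜 ∧ a.PosSemidef ∧
          u = (1 - p) * a * (1 - p)}
        = {u | u ∈ U ∧ ∃ a : Matrix (Fin n) (Fin n) ℂ, a ∈ 𝒜 ∧ a.PosSemidef ∧
          u = (1 - q) * a * (1 - q)})) :
    ({u | u ∈ U ∧ ∃ t : ℝ, ∃ a : Matrix (Fin n) (Fin n) ℂ, a ∈ 𝒜 ∧ a.PosSemidef ∧
          u = t • (1 : Matrix (Fin n) (Fin n) ℂ) + (1 - p) * a * (1 - p)}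
        ⊆ {u | u ∈ U ∧ ∃ t : ℝ, ∃ a : Matrix (Fin n) (Fin n) ℂ, a ∈ 𝒜 ∧ a.PosSemidef ∧
          u = t • (1 : Matrix (Fin n) (Fin n) ℂ) + (1 - q) * a * (1 - q)}) := by
  rintro u ⟨huU, t, a, ha𝒜, haP, hua⟩
  have hmem : u - t • (1 : Matrix (Fin n) (Fin n) ℂ) ∈
      {u | u ∈ U ∧ ∃ a : Matrix (Fin n) (Fin n) ℂ, a ∈ 𝒜 ∧ a.PosSemidef ∧
        u = (1 - p) * a * (1 - p)} := by
    refine ⟨sub_mem huU (Submodule.smul_mem U t h1), a, ha𝒜, haP, ?_⟩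
    rw [hua, add_sub_cancel_left]
  rw [hPQ] at hmem
  obtain ⟨-, b, hb𝒜, hbP, hb⟩ := hmem
  refine ⟨huU, t, b, hb𝒜, hbP, ?_⟩
  rw [← hb, add_sub_cancel]

/-- Let `𝒜 ⊆ Mₙ(ℂ)` be a *-subalgebra with identity, `A` its hermitian
part, and `U ⊆ A` a real subspace strictly containing `ℝ·id`.  Then for all projections
`p, q ∈ 𝒜`:
`(ℝ·id + p'𝒜⁺p') ∩ U = (ℝ·id + q'𝒜⁺q') ∩ U ↔ p'𝒜⁺p' ∩ U = q'𝒜⁺q' ∩ U`,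
where `p' = 1 - p` and `q' = 1 - q`. -/
theorem stmt8 {n : ℕ} (𝒜 : StarSubalgebra ℂ (Matrix (Fin n) (Fin n) ℂ))
    (U : Submodule ℝ (Matrix (Fin n) (Fin n) ℂ))
    (hU : ∀ u ∈ U, u ∈ 𝒜 ∧ uᴴ = u)
    (h1 : (1 : Matrix (Fin n) (Fin n) ℂ) ∈ U)
    (hstrict : ∃ u ∈ U, ∀ t : ℝ, u ≠ t • (1 : Matrix (Fin n) (Fin n) ℂ))
    (p q : Matrix (Fin n) (Fin n) ℂ)
    (hp : p ∈ 𝒜) (hpH : pᴴ = p) (hpi : p * p = p)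
    (hq : q ∈ 𝒜) (hqH : qᴴ = q) (hqi : q * q = q) :
    ({u | u ∈ U ∧ ∃ t : ℝ, ∃ a : Matrix (Fin n) (Fin n) ℂ, a ∈ 𝒜 ∧ a.PosSemidef ∧
          u = t • (1 : Matrix (Fin n) (Fin n) ℂ) + (1 - p) * a * (1 - p)}
        = {u | u ∈ U ∧ ∃ t : ℝ, ∃ a : Matrix (Fin n) (Fin n) ℂ, a ∈ 𝒜 ∧ a.PosSemidef ∧
          u = t • (1 : Matrix (Fin n) (Fin n) ℂ) + (1 - q) * a * (1 - q)})
      ↔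
    ({u | u ∈ U ∧ ∃ a : Matrix (Fin n) (Fin n) ℂ, a ∈ 𝒜 ∧ a.PosSemidef ∧
          u = (1 - p) * a * (1 - p)}
        = {u | u ∈ U ∧ ∃ a : Matrix (Fin n) (Fin n) ℂ, a ∈ 𝒜 ∧ a.PosSemidef ∧
          u = (1 - q) * a * (1 - q)}) := by
  constructor
  · intro hset
    exact Set.Subset.antisymm
      (stmt8_key 𝒜 U hU h1 hstrict p q hp hpH hpi hq hqH hqi hset)
      (stmt8_key 𝒜 U hU h1 hstrict q p hq hqH hqi hp hpH hpi hset.symm)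
  · intro hPQ
    exact Set.Subset.antisymm
      (stmt8_easy 𝒜 U h1 p q hPQ)
      (stmt8_easy 𝒜 U h1 q p hPQ.symm)
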